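/- Let f be three times differentiable on a Euclidean space and suppose |f'''(θ)[δ,δ,η]| ≤ S·f''(θ)[δ,δ]·√⟨η, Hη⟩ for all θ, δ, η, with S ≥ 0, and H = f''(θ*) where f'(θ*)=0. Then for all θ₁, θ₂, Δ: ⟨Δ, f'(θ₂) - f'(θ₁) - f''(θ₁)(θ₂-θ₁)⟩ ≤ S·√⟨Δ, HΔ⟩ · [f(θ₂) - f(θ₁) - ⟨f'(θ₁), θ₂-θ₁⟩]. -/

import Mathlib

open scoped RealInnerProductSpace

/-- Expansion of gradients for generalized self-concordant functions: if
`|f'''(θ)[δ,δ,η]| ≤ S·f''(θ)[δ,δ]·√⟨η,Hη⟩` with `H = f''(θ*)` and `f'(θ*) = 0`, then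
`⟨Δ, f'(θ₂) - f'(θ₁) - f''(θ₁)(θ₂-θ₁)⟩ ≤ S·√⟨Δ,HΔ⟩·[f(θ₂) - f(θ₁) - ⟨f'(θ₁),θ₂-θ₁⟩]`. -/
theorem gradient_expansion_self_concordant
    {E : Type*} [NormedAddCommGroup E] [InnerProductSpace ℝ E] [FiniteDimensional ℝ E]
    (f : E → ℝ) (g : E → E) (Hess : E → E →L[ℝ] E) (T : E → E →L[ℝ] E →L[ℝ] E)
    (θs : E) (S : ℝ) (hS : 0 ≤ S)
    (hg : ∀ θ, HasGradientAt f (g θ) θ)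
    (hHess : ∀ θ, HasFDerivAt g (Hess θ) θ)
    (hT : ∀ θ, HasFDerivAt Hess (T θ) θ)
    (hgrad0 : g θs = 0)
    (hbound : ∀ θ δ η : E,
      |⟪δ, T θ η δ⟫| ≤ S * ⟪δ, Hess θ δ⟫ * Real.sqrt ⟪η, Hess θs η⟫)
    (θ₁ θ₂ Δ : E) :
    ⟪Δ, g θ₂ - g θ₁ - Hess θ₁ (θ₂ - θ₁)⟫
      ≤ S * Real.sqrt ⟪Δ, Hess θs Δ⟫ * (f θ₂ - f θ₁ - ⟪g θ₁, θ₂ - θ₁⟫) := by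
  -- symmetry of the Hessian
  have hHsymm : ∀ θ a b : E, ⟪a, Hess θ b⟫ = ⟪b, Hess θ a⟫ := by
    intro θ a b
    have hf' : ∀ y, HasFDerivAt f (innerSL ℝ (g y)) y := by
      intro y
      have he : (innerSL ℝ (g y) : E →L[ℝ] ℝ)
          = (InnerProductSpace.toDual ℝ E (g y) : E →L[ℝ] ℝ) := by
        ext w; simp
      rw [he]; exact (hg y).hasFDerivAt
    have h'' : HasFDerivAt (fun y => innerSL ℝ (g y))
        ((innerSL ℝ : E →L[ℝ] E →L[ℝ] ℝ).comp (Hess θ)) θ :=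
      (innerSL ℝ : E →L[ℝ] E →L[ℝ] ℝ).hasFDerivAt.comp θ (hHess θ)
    have h3 := second_derivative_symmetric hf' h'' b a
    simp only [ContinuousLinearMap.comp_apply, innerSL_apply_apply] at h3
    rw [real_inner_comm, h3, real_inner_comm]
  -- symmetry of T in its two fderiv arguments
  have hTsymm : ∀ θ a b : E, T θ a b = T θ b a := fun θ a b =>
    second_derivative_symmetric hHess (hT θ) a b
  -- moving a vector across the inner product through T
  have hmove : ∀ θ (a b u : E), ⟪a, T θ u b⟫ = ⟪b, T θ u a⟫ := by
    intro θ a b u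
    have h1 : HasFDerivAt (fun y => ⟪a, Hess y b⟫)
        (((innerSL ℝ a).comp ((ContinuousLinearMap.apply ℝ E) b)).comp (T θ)) θ := by
      have := ((innerSL ℝ a).comp
        ((ContinuousLinearMap.apply ℝ E) b)).hasFDerivAt.comp θ (hT θ)
      exact this
    have h2 : HasFDerivAt (fun y => ⟪a, Hess y b⟫)
        (((innerSL ℝ b).comp ((ContinuousLinearMap.apply ℝ E) a)).comp (T θ)) θ := by
      have := ((innerSL ℝ b).comp
        ((ContinuousLinearMap.apply ℝ E) a)).hasFDerivAt.comp θ (hT θ)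
      have h2' : (fun y => ⟪b, Hess y a⟫) = (fun y => ⟪a, Hess y b⟫) := by
        funext y; exact hHsymm y b a
      rw [← h2']
      exact this
    have h3 := h1.unique h2
    have h4 := congrFun (congrArg (fun (L : E →L[ℝ] ℝ) => (L : E → ℝ)) h3) u
    simpa using h4
  set v : E := θ₂ - θ₁ with hv
  set C : ℝ := S * Real.sqrt ⟪Δ, Hess θs Δ⟫ with hC
  set c : ℝ → E := fun t => θ₁ + t • v with hcdef
  have hc : ∀ t : ℝ, HasDerivAt c v t := by
    intro t
    have := ((hasDerivAt_id t).smul_const v).const_add θ₁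
    rw [hcdef]; simpa only [one_smul, id] using this
  have hc0 : c 0 = θ₁ := by simp [hcdef]
  have hc1 : c 1 = θ₂ := by simp [hcdef, hv]
  -- derivative chains
  have hgc : ∀ t : ℝ, HasDerivAt (fun t => g (c t)) (Hess (c t) v) t := fun t =>
    (hHess (c t)).comp_hasDerivAt t (hc t)
  have hHc : ∀ t : ℝ, HasDerivAt (fun t => Hess (c t)) (T (c t) v) t := fun t =>
    (hT (c t)).comp_hasDerivAt t (hc t)
  have hfc : ∀ t : ℝ, HasDerivAt (fun t => f (c t)) ⟪v, g (c t)⟫ t := by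
    intro t
    have := ((hg (c t)).hasFDerivAt).comp_hasDerivAt t (hc t)
    simpa [InnerProductSpace.toDual_apply_apply, real_inner_comm, Function.comp_def] using this
  set ψ : ℝ → ℝ := fun t => f (c t) - f θ₁ - t * ⟪v, g θ₁⟫ with hψdef
  set ψ₁ : ℝ → ℝ := fun t => ⟪v, g (c t)⟫ - ⟪v, g θ₁⟫ with hψ₁def
  set φ : ℝ → ℝ := fun t => ⟪Δ, g (c t)⟫ - ⟪Δ, g θ₁⟫ - t * ⟪Δ, Hess θ₁ v⟫ with hφdef
  set φ₁ : ℝ → ℝ := fun t => ⟪Δ, Hess (c t) v⟫ - ⟪Δ, Hess θ₁ v⟫ with hφ₁def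
  have hψ : ∀ t : ℝ, HasDerivAt ψ (ψ₁ t) t := by
    intro t
    have h2 : HasDerivAt (fun t : ℝ => t * ⟪v, g θ₁⟫) ⟪v, g θ₁⟫ t := by
      simpa using (hasDerivAt_id t).mul_const ⟪v, g θ₁⟫
    simpa [hψdef, hψ₁def, Pi.sub_def] using ((hfc t).sub_const (f θ₁)).sub h2
  have hψ₁ : ∀ t : ℝ, HasDerivAt ψ₁ ⟪v, Hess (c t) v⟫ t := by
    intro t
    have := ((innerSL ℝ v).hasFDerivAt.comp_hasDerivAt t (hgc t))
    simpa [hψ₁def] using (this.sub_const ⟪v, g θ₁⟫)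
  have hφ : ∀ t : ℝ, HasDerivAt φ (φ₁ t) t := by
    intro t
    have h1 := ((innerSL ℝ Δ).hasFDerivAt.comp_hasDerivAt t (hgc t))
    have h2 : HasDerivAt (fun t : ℝ => t * ⟪Δ, Hess θ₁ v⟫) ⟪Δ, Hess θ₁ v⟫ t := by
      simpa using (hasDerivAt_id t).mul_const ⟪Δ, Hess θ₁ v⟫
    simpa [hφdef, hφ₁def, Pi.sub_def] using (h1.sub_const ⟪Δ, g θ₁⟫).sub h2
  have hφ₁ : ∀ t : ℝ, HasDerivAt φ₁ ⟪Δ, T (c t) v v⟫ t := by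
    intro t
    have h1 := (((innerSL ℝ Δ).comp
        ((ContinuousLinearMap.apply ℝ E) v)).hasFDerivAt.comp_hasDerivAt t (hHc t))
    simpa [hφ₁def] using (h1.sub_const ⟪Δ, Hess θ₁ v⟫)
  -- the key pointwise bound
  have key : ∀ t : ℝ, ⟪Δ, T (c t) v v⟫ ≤ C * ⟪v, Hess (c t) v⟫ := by
    intro t
    have e1 : ⟪Δ, T (c t) v v⟫ = ⟪v, T (c t) Δ v⟫ := by
      rw [hmove (c t) Δ v v, hTsymm (c t) v Δ]
    have e2 := (le_abs_self _).trans (hbound (c t) v Δ)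
    rw [e1]
    calc ⟪v, T (c t) Δ v⟫ ≤ S * ⟪v, Hess (c t) v⟫ * Real.sqrt ⟪Δ, Hess θs Δ⟫ := e2
      _ = C * ⟪v, Hess (c t) v⟫ := by rw [hC]; ring
  set D : ℝ → ℝ := fun t => C * ψ t - φ t with hDdef
  set D₁ : ℝ → ℝ := fun t => C * ψ₁ t - φ₁ t with hD₁def
  have hD : ∀ t : ℝ, HasDerivAt D (D₁ t) t := fun t =>
    ((hψ t).const_mul C).sub (hφ t)
  have hD₁ : ∀ t : ℝ, HasDerivAt D₁ (C * ⟪v, Hess (c t) v⟫ - ⟪Δ, T (c t) v v⟫) t :=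
    fun t => ((hψ₁ t).const_mul C).sub (hφ₁ t)
  have hD₁mono : Monotone D₁ := by
    have hdiff : Differentiable ℝ D₁ := fun t => (hD₁ t).differentiableAt
    apply monotone_of_deriv_nonneg hdiff
    intro t
    rw [(hD₁ t).deriv]
    linarith [key t]
  have hD₁0 : D₁ 0 = 0 := by simp [hD₁def, hψ₁def, hφ₁def, hc0]
  have hD₁nonneg : ∀ t : ℝ, 0 ≤ t → 0 ≤ D₁ t := by
    intro t ht
    rw [← hD₁0]; exact hD₁mono ht
  have hDmono : MonotoneOn D (Set.Ici (0:ℝ)) := by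
    apply monotoneOn_of_deriv_nonneg (convex_Ici 0)
    · have hdiffD : Differentiable ℝ D := fun t => (hD t).differentiableAt
      exact hdiffD.continuous.continuousOn
    · intro t ht
      exact ((hD t).differentiableAt).differentiableWithinAt
    · intro t ht
      rw [(hD t).deriv]
      exact hD₁nonneg t (le_of_lt (by simpa using ht))
  have hD0 : D 0 = 0 := by simp [hDdef, hψdef, hφdef, hc0]
  have hfinal : (0:ℝ) ≤ D 1 := by
    rw [← hD0]
    exact hDmono (by simp) (by norm_num : (1:ℝ) ∈ Set.Ici (0:ℝ)) zero_le_one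
  have hφ1 : φ 1 = ⟪Δ, g θ₂ - g θ₁ - Hess θ₁ (θ₂ - θ₁)⟫ := by
    simp [hφdef, hc1, inner_sub_right, hv]
  have hψ1 : ψ 1 = f θ₂ - f θ₁ - ⟪g θ₁, θ₂ - θ₁⟫ := by
    simp [hψdef, hc1, hv, real_inner_comm]
  have : φ 1 ≤ C * ψ 1 := by
    have := hfinal
    simp only [hDdef] at this
    linarith
  rw [← hφ1, ← hψ1]
  exact this
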